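/- Let A be an associative unital ℚ-algebra and let (J0, Jp, Jm, P) be an osp(1,2)-realization in A. In the triple tensor product A ⊗ A ⊗ A over ℚ, the threefold coproduct elements J0' = J0⊗1⊗1 + 1⊗J0⊗1 + 1⊗1⊗J0, Jp' = Jp⊗P⊗P + 1⊗Jp⊗P + 1⊗1⊗Jp, Jm' = Jm⊗P⊗P + 1⊗Jm⊗P + 1⊗1⊗Jm, P' = P⊗P⊗P form an osp(1,2)-realization in A ⊗ A ⊗ A, i.e. they satisfy all seven osp(1,2) relations. -/

import Mathlib

open scoped TensorProduct

lemma coprod_realization {A B : Type*} [Ring A] [Algebra ℚ A] [Ring B] [Algebra ℚ B]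
    (J0a Jpa Jma Pa : A) (J0b Jpb Jmb Pb : B)
    (a1 : J0a*Jpa - Jpa*J0a = Jpa) (a2 : J0a*Jma - Jma*J0a = -Jma)
    (a3 : Jpa*Jma + Jma*Jpa = 2*J0a) (a4 : J0a*Pa = Pa*J0a)
    (a5 : Jpa*Pa + Pa*Jpa = 0) (a6 : Jma*Pa + Pa*Jma = 0) (a7 : Pa^2 = 1)
    (b1 : J0b*Jpb - Jpb*J0b = Jpb) (b2 : J0b*Jmb - Jmb*J0b = -Jmb)
    (b3 : Jpb*Jmb + Jmb*Jpb = 2*J0b) (b4 : J0b*Pb = Pb*J0b)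
    (b5 : Jpb*Pb + Pb*Jpb = 0) (b6 : Jmb*Pb + Pb*Jmb = 0) (b7 : Pb^2 = 1) :
    let J0' : A ⊗[ℚ] B := J0a ⊗ₜ 1 + 1 ⊗ₜ J0b
    let Jp' : A ⊗[ℚ] B := Jpa ⊗ₜ Pb + 1 ⊗ₜ Jpb
    let Jm' : A ⊗[ℚ] B := Jma ⊗ₜ Pb + 1 ⊗ₜ Jmb
    let P' : A ⊗[ℚ] B := Pa ⊗ₜ Pb
    J0'*Jp' - Jp'*J0' = Jp' ∧ J0'*Jm' - Jm'*J0' = -Jm' ∧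
    Jp'*Jm' + Jm'*Jp' = 2*J0' ∧ J0'*P' = P'*J0' ∧
    Jp'*P' + P'*Jp' = 0 ∧ Jm'*P' + P'*Jm' = 0 ∧ P'^2 = 1 := by
  have e1a : J0a*Jpa = Jpa + Jpa*J0a := eq_add_of_sub_eq a1
  have e2a : J0a*Jma = -Jma + Jma*J0a := eq_add_of_sub_eq a2
  have e3a : Jpa*Jma = 2*J0a - Jma*Jpa := eq_sub_of_add_eq a3
  have e5a : Jpa*Pa = -(Pa*Jpa) := eq_neg_of_add_eq_zero_left a5
  have e6a : Jma*Pa = -(Pa*Jma) := eq_neg_of_add_eq_zero_left a6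
  have e7a : Pa*Pa = 1 := by rw [← pow_two]; exact a7
  have e1b : J0b*Jpb = Jpb + Jpb*J0b := eq_add_of_sub_eq b1
  have e2b : J0b*Jmb = -Jmb + Jmb*J0b := eq_add_of_sub_eq b2
  have e3b : Jpb*Jmb = 2*J0b - Jmb*Jpb := eq_sub_of_add_eq b3
  have e5b : Jpb*Pb = -(Pb*Jpb) := eq_neg_of_add_eq_zero_left b5
  have e6b : Jmb*Pb = -(Pb*Jmb) := eq_neg_of_add_eq_zero_left b6
  have e7b : Pb*Pb = 1 := by rw [← pow_two]; exact b7
  refine ⟨?_, ?_, ?_, ?_, ?_, ?_, ?_⟩ <;>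
  · simp only [pow_two, mul_add, add_mul, Algebra.TensorProduct.tmul_mul_tmul,
      one_mul, mul_one, e1a, e2a, e3a, a4, e5a, e6a, e7a,
      e1b, e2b, e3b, b4, e5b, e6b, e7b, two_mul,
      TensorProduct.tmul_add, TensorProduct.add_tmul, TensorProduct.tmul_sub,
      TensorProduct.sub_tmul, TensorProduct.tmul_neg, TensorProduct.neg_tmul,
      Algebra.TensorProduct.one_def]
    try abel

/-- The threefold coproduct of an `osp(1,2)`-realization is an `osp(1,2)`-realization
in `A ⊗[ℚ] A ⊗[ℚ] A`. -/
theorem threefold_coproduct_is_realization {A : Type*} [Ring A] [Algebra ℚ A]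
    (J0 Jp Jm P : A)
    (h1 : J0*Jp - Jp*J0 = Jp)
    (h2 : J0*Jm - Jm*J0 = -Jm)
    (h3 : Jp*Jm + Jm*Jp = 2*J0)
    (h4 : J0*P = P*J0)
    (h5 : Jp*P + P*Jp = 0)
    (h6 : Jm*P + P*Jm = 0)
    (h7 : P^2 = 1) :
    let J0' : A ⊗[ℚ] (A ⊗[ℚ] A) :=
      J0 ⊗ₜ ((1:A) ⊗ₜ (1:A)) + (1:A) ⊗ₜ (J0 ⊗ₜ (1:A)) + (1:A) ⊗ₜ ((1:A) ⊗ₜ J0)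
    let Jp' : A ⊗[ℚ] (A ⊗[ℚ] A) := Jp ⊗ₜ (P ⊗ₜ P) + (1:A) ⊗ₜ (Jp ⊗ₜ P) + (1:A) ⊗ₜ ((1:A) ⊗ₜ Jp)
    let Jm' : A ⊗[ℚ] (A ⊗[ℚ] A) := Jm ⊗ₜ (P ⊗ₜ P) + (1:A) ⊗ₜ (Jm ⊗ₜ P) + (1:A) ⊗ₜ ((1:A) ⊗ₜ Jm)
    let P' : A ⊗[ℚ] (A ⊗[ℚ] A) := P ⊗ₜ (P ⊗ₜ P)
    J0'*Jp' - Jp'*J0' = Jp' ∧ J0'*Jm' - Jm'*J0' = -Jm' ∧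
    Jp'*Jm' + Jm'*Jp' = 2*J0' ∧ J0'*P' = P'*J0' ∧
    Jp'*P' + P'*Jp' = 0 ∧ Jm'*P' + P'*Jm' = 0 ∧ P'^2 = 1 := by
  intro J0' Jp' Jm' P'
  obtain ⟨c1, c2, c3, c4, c5, c6, c7⟩ :=
    coprod_realization J0 Jp Jm P J0 Jp Jm P h1 h2 h3 h4 h5 h6 h7 h1 h2 h3 h4 h5 h6 h7
  obtain ⟨d1, d2, d3, d4, d5, d6, d7⟩ :=
    coprod_realization (B := A ⊗[ℚ] A) J0 Jp Jm P _ _ _ _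
      h1 h2 h3 h4 h5 h6 h7 c1 c2 c3 c4 c5 c6 c7
  simp only [Algebra.TensorProduct.one_def, TensorProduct.tmul_add] at d1 d2 d3 d4 d5 d6 d7
  have hJ0 : J0' = J0 ⊗ₜ ((1:A) ⊗ₜ (1:A)) + ((1:A) ⊗ₜ (J0 ⊗ₜ (1:A)) + (1:A) ⊗ₜ ((1:A) ⊗ₜ J0)) := by
    simp [J0', add_assoc]
  have hJp : Jp' = Jp ⊗ₜ (P ⊗ₜ P) + ((1:A) ⊗ₜ (Jp ⊗ₜ P) + (1:A) ⊗ₜ ((1:A) ⊗ₜ Jp)) := by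
    simp [Jp', add_assoc]
  have hJm : Jm' = Jm ⊗ₜ (P ⊗ₜ P) + ((1:A) ⊗ₜ (Jm ⊗ₜ P) + (1:A) ⊗ₜ ((1:A) ⊗ₜ Jm)) := by
    simp [Jm', add_assoc]
  rw [hJ0, hJp, hJm]
  exact ⟨d1, d2, d3, d4, d5, d6, d7⟩
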